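/- With α_i = s_{β_1}···s_{β_{i-1}}(β_i) constructed from simple roots β_1,...,β_N, for all i < j one has Σ_{k=i+1}^{j-1} ⟨α_k^∨, α_j⟩·⟨β_i^∨, β_k⟩ = -⟨α_i^∨, α_j⟩ - ⟨β_i^∨, β_j⟩. -/

import Mathlib

open RealInnerProductSpace

variable {V : Type*} [NormedAddCommGroup V] [InnerProductSpace ℝ V]

/-- The coroot pairing `⟨α^∨, x⟩ = 2 (α, x)/(α, α)`. -/
noncomputable def pairC (α x : V) : ℝ := 2 * ⟪α, x⟫ / ⟪α, α⟫

/-- The reflection in the root `α`. -/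
noncomputable def sref (α : V) (x : V) : V := x - pairC α x • α

/-- `wSeq β k = s_{β 0} ∘ ⋯ ∘ s_{β (k-1)}`. -/
noncomputable def wSeq (β : ℕ → V) : ℕ → V → V
  | 0 => id
  | k + 1 => wSeq β k ∘ sref (β k)

/-- `alphaSeq β k = s_{β 0} ⋯ s_{β (k-1)} (β k)`; in the 1-indexed notation of the paper,
`α_k = s_{β_1} ⋯ s_{β_{k-1}} (β_k)`. -/
noncomputable def alphaSeq (β : ℕ → V) (k : ℕ) : V := wSeq β k (β k)

/-- `wSeqRev β k = s_{β (k-1)} ∘ ⋯ ∘ s_{β 0}`, the word read in the opposite order. -/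
noncomputable def wSeqRev (β : ℕ → V) : ℕ → V → V
  | 0 => id
  | k + 1 => sref (β k) ∘ wSeqRev β k

lemma sref_zero (x : V) : sref (0 : V) x = x := by
  simp [sref, pairC]

lemma inner_sref_sref (γ x y : V) : ⟪sref γ x, sref γ y⟫ = ⟪x, y⟫ := by
  by_cases h : γ = 0
  · simp [h, sref_zero]
  · have hγ : ⟪γ, γ⟫ ≠ 0 := fun hz => h (inner_self_eq_zero.mp hz)
    simp only [sref, pairC, inner_sub_left, inner_sub_right, real_inner_smul_left,
      real_inner_smul_right]
    rw [real_inner_comm x γ]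
    field_simp
    ring

lemma pairC_sref_sref (γ x y : V) : pairC (sref γ x) (sref γ y) = pairC x y := by
  simp only [pairC, inner_sref_sref]

lemma sref_self (γ : V) : sref γ γ = -γ := by
  by_cases h : γ = 0
  · simp [h, sref_zero]
  · have hγ : ⟪γ, γ⟫ ≠ 0 := fun hz => h (inner_self_eq_zero.mp hz)
    have : pairC γ γ = 2 := by unfold pairC; rw [mul_div_assoc, div_self hγ, mul_one]
    rw [sref, this]; module

lemma pairC_neg_left (γ x : V) : pairC (-γ) x = -pairC γ x := by
  simp [pairC, neg_div, ← neg_div, neg_mul, mul_neg]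

lemma pairC_wSeq (β : ℕ → V) (n : ℕ) (x y : V) :
    pairC (wSeq β n x) (wSeq β n y) = pairC x y := by
  induction n generalizing x y with
  | zero => rfl
  | succ k ih => simpa [wSeq] using (ih _ _).trans (pairC_sref_sref (β k) x y)

lemma pairC_add_right (α x y : V) : pairC α (x + y) = pairC α x + pairC α y := by
  simp [pairC, inner_add_right, mul_add, add_div]

lemma pairC_smul_right (α : V) (c : ℝ) (x : V) : pairC α (c • x) = c * pairC α x := by
  simp only [pairC, real_inner_smul_right]
  ring

lemma pairC_sum_right (α : V) (s : Finset ℕ) (f : ℕ → V) :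
    pairC α (∑ k ∈ s, f k) = ∑ k ∈ s, pairC α (f k) := by
  induction s using Finset.cons_induction with
  | empty => simp [pairC]
  | cons a s ha ih => rw [Finset.sum_cons, Finset.sum_cons, pairC_add_right, ih]

/-- `dSeq β j t = s_{β (j-t)} ⋯ s_{β (j-1)} (β j)`. -/
noncomputable def dSeq (β : ℕ → V) (j : ℕ) : ℕ → V
  | 0 => β j
  | t + 1 => sref (β (j - (t + 1))) (dSeq β j t)

lemma wSeq_dSeq (β : ℕ → V) (j : ℕ) :
    ∀ t m, m + t = j → wSeq β m (dSeq β j t) = alphaSeq β j := by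
  intro t
  induction t with
  | zero => intro m hm; subst hm; simp; rfl
  | succ t ih =>
    intro m hm
    have hmj : j - (t + 1) = m := by omega
    have : dSeq β j (t + 1) = sref (β m) (dSeq β j t) := by rw [dSeq, hmj]
    rw [this]
    have : wSeq β m (sref (β m) (dSeq β j t)) = wSeq β (m + 1) (dSeq β j t) := rfl
    rw [this, ih (m + 1) (by omega)]

lemma key_pair (β : ℕ → V) (j m t : ℕ) (h : m + 1 + t = j) :
    pairC (β m) (dSeq β j t) = -pairC (alphaSeq β m) (alphaSeq β j) := by
  have hmj : j - (t + 1) = m := by omega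
  have hd : dSeq β j (t + 1) = sref (β m) (dSeq β j t) := by rw [dSeq, hmj]
  have h1 : pairC (β m) (dSeq β j t)
      = pairC (-β m) (dSeq β j (t + 1)) := by
    rw [hd, ← sref_self (β m), pairC_sref_sref]
  have h2 : pairC (β m) (dSeq β j (t + 1))
      = pairC (alphaSeq β m) (alphaSeq β j) := by
    rw [← pairC_wSeq β m (β m) (dSeq β j (t + 1))]
    congr 1
    exact wSeq_dSeq β j (t + 1) m (by omega)
  rw [h1, pairC_neg_left, h2]

lemma dSeq_eq (β : ℕ → V) (j : ℕ) :
    ∀ t, t ≤ j → dSeq β j t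
      = β j + ∑ k ∈ Finset.Ico (j - t) j, pairC (alphaSeq β k) (alphaSeq β j) • β k := by
  intro t
  induction t with
  | zero => intro _; simp [dSeq]
  | succ t ih =>
    intro ht
    have hmj : j - (t + 1) = j - t - 1 := by omega
    set m := j - (t + 1) with hm
    have hd : dSeq β j (t + 1) = sref (β m) (dSeq β j t) := by rw [dSeq]
    have hk : pairC (β m) (dSeq β j t) = -pairC (alphaSeq β m) (alphaSeq β j) :=
      key_pair β j m t (by omega)
    rw [hd, sref, hk, ih (by omega)]
    have hsplit : ∑ k ∈ Finset.Ico m j, pairC (alphaSeq β k) (alphaSeq β j) • β k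
        = pairC (alphaSeq β m) (alphaSeq β j) • β m
          + ∑ k ∈ Finset.Ico (m + 1) j, pairC (alphaSeq β k) (alphaSeq β j) • β k :=
      Finset.sum_eq_sum_Ico_succ_bot (by omega) _
    have hjt : j - t = m + 1 := by omega
    rw [hjt, hsplit]
    module

/-- With `α_k = s_{β_1} ⋯ s_{β_{k-1}}(β_k)` constructed from simple
roots `β 0, …, β (N-1)` of a root system `Φ`, for all `i < j < N`:
`∑_{k=i+1}^{j-1} ⟨α_k^∨, α_j⟩ ⟨β_i^∨, β_k⟩ = -⟨α_i^∨, α_j⟩ - ⟨β_i^∨, β_j⟩`. -/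
theorem sum_pairing_middle_terms
    (Φ : Set V) (hne : ∀ α ∈ Φ, α ≠ 0) (hrefl : ∀ α ∈ Φ, ∀ γ ∈ Φ, sref α γ ∈ Φ)
    (N : ℕ) (β : ℕ → V) (hβ : ∀ i, i < N → β i ∈ Φ) :
    ∀ i j, i < j → j < N →
      (∑ k ∈ Finset.Ico (i + 1) j,
          pairC (alphaSeq β k) (alphaSeq β j) * pairC (β i) (β k)) =
        -pairC (alphaSeq β i) (alphaSeq β j) - pairC (β i) (β j) := by
  intro i j hij hjN
  set t := j - (i + 1) with ht
  have h1 : pairC (β i) (dSeq β j t) = -pairC (alphaSeq β i) (alphaSeq β j) :=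
    key_pair β j i t (by omega)
  have h2 : dSeq β j t
      = β j + ∑ k ∈ Finset.Ico (i + 1) j, pairC (alphaSeq β k) (alphaSeq β j) • β k := by
    have := dSeq_eq β j t (by omega)
    rwa [show j - t = i + 1 by omega] at this
  rw [h2, pairC_add_right, pairC_sum_right] at h1
  have h3 : ∀ k ∈ Finset.Ico (i + 1) j,
      pairC (β i) (pairC (alphaSeq β k) (alphaSeq β j) • β k)
        = pairC (alphaSeq β k) (alphaSeq β j) * pairC (β i) (β k) := by
    intro k _; exact pairC_smul_right _ _ _
  rw [Finset.sum_congr rfl h3] at h1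
  linarith
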